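/- Let M be a monoidal category. There is an equivalence between: (a) semigroup objects (semi-monoids) in M, i.e. objects A with an associative multiplication μ : A ⊗ A → A; and (b) strict Co-Segal semi-monoids, i.e. lax monoidal functors F : (Δ_epi, +)^op → M such that F(u) is an isomorphism for every morphism u of Δ_epi. -/

import Mathlib

universe v u

open CategoryTheory Limits MonoidalCategory

/-- A morphism `a ⟶ b` of the semi-monoidal category `Υ = (Δ_epi, +)` of finite nonempty
ordinals and surjective monotone maps; the object `n : ℕ` stands for the ordinal with
`n + 1` elements `{0, …, n}`, and a morphism is (a normalized presentation of) a
surjective monotone map `{0, …, a} ↠ {0, …, b}`. -/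
structure EHom (a b : ℕ) : Type where
  f : ℕ → ℕ
  mono : Monotone f
  bound : ∀ k, a ≤ k → f k = b
  surj : ∀ j, j ≤ b → ∃ i, i ≤ a ∧ f i = j

namespace EHom

/-- The identity morphism of `Υ`. -/
def id (a : ℕ) : EHom a a where
  f := fun k => min k a
  mono := by intro x y h; dsimp only; omega
  bound := by intro k hk; (try dsimp only); omega
  surj := fun j hj => ⟨j, hj, by (try dsimp only); omega⟩

/-- Composition in `Υ`. -/
def comp {a b c : ℕ} (u : EHom a b) (w : EHom b c) : EHom a c where
  f := fun k => w.f (u.f k)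
  mono := fun _ _ h => w.mono (u.mono h)
  bound := fun k hk => by (try dsimp only); rw [u.bound k hk, w.bound b le_rfl]
  surj := fun j hj => by
    obtain ⟨i, hi, hfi⟩ := w.surj j hj
    obtain ⟨i', hi', hfi'⟩ := u.surj i hi
    exact ⟨i', hi', by (try dsimp only); rw [hfi', hfi]⟩

/-- The tensor product (ordinal addition) of morphisms in `Υ = (Δ_epi, +)`:
`u + w : (a + b + 1) ⟶ (a' + b' + 1)` for `u : a ⟶ a'` and `w : b ⟶ b'`. -/
def add {a a' b b' : ℕ} (u : EHom a a') (w : EHom b b') :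
    EHom (a + b + 1) (a' + b' + 1) where
  f := fun k => if k < a + 1 then u.f k else a' + 1 + w.f (k - (a + 1))
  mono := by
    intro x y hxy
    dsimp only
    split_ifs with h1 h2
    · exact u.mono hxy
    · have h3 : u.f x ≤ u.f a := u.mono (by omega)
      have h4 : u.f a = a' := u.bound a le_rfl
      omega
    · omega
    · have := w.mono (show x - (a + 1) ≤ y - (a + 1) by omega)
      omega
  bound := by
    intro k hk
    try dsimp only
    rw [if_neg (by omega), w.bound (k - (a + 1)) (by omega)]
    omega
  surj := by
    intro j hj
    rcases lt_or_ge j (a' + 1) with h | h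
    · obtain ⟨i, hi, hfi⟩ := u.surj j (by omega)
      refine ⟨i, by omega, ?_⟩
      try dsimp only
      rw [if_pos (by omega)]
      exact hfi
    · obtain ⟨i, hi, hfi⟩ := w.surj (j - (a' + 1)) (by omega)
      refine ⟨a + 1 + i, by omega, ?_⟩
      try dsimp only
      rw [if_neg (by omega), show a + 1 + i - (a + 1) = i by omega, hfi]
      omega

end EHom

variable (M : Type u) [Category.{v} M] [MonoidalCategory M]

/-- A semigroup object (semi-monoid) in a monoidal category: an object with an
associative multiplication. -/
structure SemigrpObj where
  X : M
  mul : X ⊗ X ⟶ X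
  mul_assoc : (mul ▷ X) ≫ mul = (α_ X X X).hom ≫ (X ◁ mul) ≫ mul

instance SemigrpObj.category : Category (SemigrpObj M) where
  Hom A B := {f : A.X ⟶ B.X // A.mul ≫ f = (f ⊗ₘ f) ≫ B.mul}
  id A := ⟨𝟙 A.X, by simp⟩
  comp f g := ⟨f.1 ≫ g.1, by
    rw [← Category.assoc, f.2, Category.assoc, g.2, ← Category.assoc,
      MonoidalCategory.tensorHom_comp_tensorHom]⟩
  id_comp f := Subtype.ext (Category.id_comp f.1)
  comp_id f := Subtype.ext (Category.comp_id f.1)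
  assoc f g h := Subtype.ext (Category.assoc f.1 g.1 h.1)

/-- A pre-Co-Segal semi-monoid in a monoidal category `M`: a lax monoidal functor
`F : Υᵒᵖ = (Δ_epi, +)ᵒᵖ → M`, given by objects `F n`, contravariant functorial structure
maps `F (u) : F b ⟶ F a` for `u : a ⟶ b` in `Υ`, and laxity maps
`F a ⊗ F b ⟶ F (a + b + 1)` which are natural and associative-coherent.  It is a
(strict) *Co-Segal semi-monoid* when all structure maps `F (u)` are (iso)weak
equivalences. -/
structure CoSegalSemiMonoid where
  obj : ℕ → M
  map : ∀ {a b : ℕ}, EHom a b → (obj b ⟶ obj a)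
  map_id : ∀ a, map (EHom.id a) = 𝟙 (obj a)
  map_comp : ∀ {a b c : ℕ} (u : EHom a b) (w : EHom b c),
    map (u.comp w) = map w ≫ map u
  lax : ∀ a b : ℕ, obj a ⊗ obj b ⟶ obj (a + b + 1)
  lax_natural : ∀ {a a' b b' : ℕ} (u : EHom a a') (w : EHom b b'),
    (map u ⊗ₘ map w) ≫ lax a b = lax a' b' ≫ map (u.add w)
  lax_assoc : ∀ a b c : ℕ,
    (lax a b ▷ obj c) ≫ lax (a + b + 1) c =
      (α_ (obj a) (obj b) (obj c)).hom ≫ (obj a ◁ lax b c) ≫ lax a (b + c + 1) ≫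
        eqToHom (by rw [show a + (b + c + 1) + 1 = a + b + 1 + c + 1 by omega])

variable {M}

/-- A morphism of (pre-)Co-Segal semi-monoids: a monoidal natural transformation. -/
structure CoSegalHom (P Q : CoSegalSemiMonoid M) where
  app : ∀ n : ℕ, P.obj n ⟶ Q.obj n
  naturality : ∀ {a b : ℕ} (u : EHom a b), P.map u ≫ app a = app b ≫ Q.map u
  monoidal : ∀ a b : ℕ,
    (app a ⊗ₘ app b) ≫ Q.lax a b = P.lax a b ≫ app (a + b + 1)

theorem CoSegalHom.ext' {P Q : CoSegalSemiMonoid M} {f g : CoSegalHom P Q}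
    (h : ∀ n, f.app n = g.app n) : f = g := by
  obtain ⟨fapp, fnat, fmon⟩ := f
  obtain ⟨gapp, gnat, gmon⟩ := g
  have he : fapp = gapp := funext h
  subst he
  rfl

instance CoSegalSemiMonoid.category : Category (CoSegalSemiMonoid M) where
  Hom := CoSegalHom
  id P := ⟨fun n => 𝟙 (P.obj n), fun u => by simp, fun a b => by
    simp [MonoidalCategory.id_tensorHom_id]⟩
  comp f g := ⟨fun n => f.app n ≫ g.app n, fun u => by
      rw [← Category.assoc, f.naturality u, Category.assoc, g.naturality u,
        ← Category.assoc],
    fun a b => by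
      rw [← MonoidalCategory.tensorHom_comp_tensorHom, Category.assoc, g.monoidal a b,
        ← Category.assoc, f.monoidal a b, Category.assoc]⟩
  id_comp f := CoSegalHom.ext' fun n => Category.id_comp (f.app n)
  comp_id f := CoSegalHom.ext' fun n => Category.comp_id (f.app n)
  assoc f g h := CoSegalHom.ext' fun n => Category.assoc _ _ _

/-! ### Auxiliary constructions for the equivalence -/

namespace EHom

theorem ext_f {a b : ℕ} {u w : EHom a b} (h : u.f = w.f) : u = w := by
  cases u; cases w; cases h; rfl

/-- The unique morphism to the terminal object `0` of `Υ`. -/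
def toZero (a : ℕ) : EHom a 0 where
  f := fun _ => 0
  mono := monotone_const
  bound := fun _ _ => rfl
  surj := fun j hj => ⟨0, Nat.zero_le _, (Nat.le_zero.mp hj).symm⟩

theorem eq_toZero {a : ℕ} (u : EHom a 0) : u = toZero a := by
  apply ext_f
  funext k
  rcases le_or_gt a k with h | h
  · exact u.bound k h
  · have h1 := u.mono (le_of_lt h)
    have h2 := u.bound a le_rfl
    simp only [toZero]
    omega

end EHom

namespace CoSegalAux

variable {M : Type u} [Category.{v} M] [MonoidalCategory M]

/-- The pre-Co-Segal semi-monoid associated to a semigroup object. -/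
def ofSemigrp (A : SemigrpObj M) : CoSegalSemiMonoid M where
  obj _ := A.X
  map _ := 𝟙 A.X
  map_id _ := rfl
  map_comp _ _ := (Category.comp_id _).symm
  lax _ _ := A.mul
  lax_natural _ _ := by simp
  lax_assoc a b c := by
    rw [eqToHom_refl, Category.comp_id]
    exact A.mul_assoc

/-- The semigroup object associated to a strict Co-Segal semi-monoid. -/
noncomputable def toSemigrp (P : CoSegalSemiMonoid M)
    (hP : ∀ {a b : ℕ} (u : EHom a b), IsIso (P.map u)) : SemigrpObj M where
  X := P.obj 0
  mul := P.lax 0 0 ≫ inv (P.map (EHom.toZero 1)) (I := hP _)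
  mul_assoc := by
    letI := fun {a b : ℕ} (u : EHom a b) => hP u
    set s := P.map (EHom.toZero 1) with hs
    let τ : EHom 2 1 := (EHom.toZero 1).add (EHom.id 0)
    let τ' : EHom 2 1 := (EHom.id 0).add (EHom.toZero 1)
    have hττ' : P.map τ = P.map τ' := by
      have h1 : P.map (EHom.toZero 1) ≫ P.map τ =
          P.map (EHom.toZero 1) ≫ P.map τ' := by
        rw [← P.map_comp τ (EHom.toZero 1), ← P.map_comp τ' (EHom.toZero 1),
          EHom.eq_toZero (τ.comp (EHom.toZero 1)),
          EHom.eq_toZero (τ'.comp (EHom.toZero 1))]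
      exact (cancel_epi (P.map (EHom.toZero 1))).mp h1
    have E1 : (s ▷ P.obj 0) ≫ P.lax 1 0 = P.lax 0 0 ≫ P.map τ := by
      have h := P.lax_natural (EHom.toZero 1) (EHom.id 0)
      rw [P.map_id, MonoidalCategory.tensorHom_id] at h
      exact h
    have E2 : (P.obj 0 ◁ s) ≫ P.lax 0 1 = P.lax 0 0 ≫ P.map τ' := by
      have h := P.lax_natural (EHom.id 0) (EHom.toZero 1)
      rw [P.map_id, MonoidalCategory.id_tensorHom] at h
      exact h
    have E3 : (P.lax 0 0 ▷ P.obj 0) ≫ P.lax 1 0 =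
        (α_ (P.obj 0) (P.obj 0) (P.obj 0)).hom ≫ (P.obj 0 ◁ P.lax 0 0) ≫
          P.lax 0 1 := by
      have h := P.lax_assoc 0 0 0
      rwa [eqToHom_refl, Category.comp_id] at h
    have K1 : ((inv s) ▷ P.obj 0) ≫ P.lax 0 0 = P.lax 1 0 ≫ inv (P.map τ) := by
      rw [IsIso.eq_comp_inv, Category.assoc, ← E1, ← Category.assoc,
        ← MonoidalCategory.comp_whiskerRight, IsIso.inv_hom_id,
        MonoidalCategory.id_whiskerRight, Category.id_comp]
    have K2 : (P.obj 0 ◁ (inv s)) ≫ P.lax 0 0 = P.lax 0 1 ≫ inv (P.map τ') := by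
      rw [IsIso.eq_comp_inv, Category.assoc, ← E2, ← Category.assoc,
        ← MonoidalCategory.whiskerLeft_comp, IsIso.inv_hom_id,
        MonoidalCategory.whiskerLeft_id, Category.id_comp]
    simp only [MonoidalCategory.comp_whiskerRight,
      MonoidalCategory.whiskerLeft_comp, Category.assoc]
    rw [reassoc_of% K1, reassoc_of% K2, reassoc_of% E3]; simp only [hττ']

/-- Morphism part of `ofSemigrp`. -/
def ofSemigrpHom {A B : SemigrpObj M} (f : A ⟶ B) :
    CoSegalHom (ofSemigrp A) (ofSemigrp B) where
  app _ := f.1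
  naturality _ := by simp [ofSemigrp]
  monoidal _ _ := f.2.symm

variable (M) in
/-- The functor from semigroup objects to strict Co-Segal semi-monoids. -/
def Fn : SemigrpObj M ⥤ ObjectProperty.FullSubcategory (fun P : CoSegalSemiMonoid M =>
    ∀ {a b : ℕ} (u : EHom a b), IsIso (P.map u)) where
  obj A := ⟨ofSemigrp A, fun {a b} _ => inferInstanceAs (IsIso (𝟙 A.X))⟩
  map f := ObjectProperty.homMk (ofSemigrpHom f)
  map_id _ := ObjectProperty.hom_ext _ (CoSegalHom.ext' fun _ => rfl)
  map_comp _ _ := ObjectProperty.hom_ext _ (CoSegalHom.ext' fun _ => rfl)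

variable (M) in
/-- The functor from strict Co-Segal semi-monoids to semigroup objects. -/
noncomputable def Gn : ObjectProperty.FullSubcategory (fun P : CoSegalSemiMonoid M =>
    ∀ {a b : ℕ} (u : EHom a b), IsIso (P.map u)) ⥤ SemigrpObj M where
  obj P := toSemigrp P.1 P.2
  map {P Q} h := ⟨h.hom.app 0, by
    letI := fun {a b : ℕ} (u : EHom a b) => P.2 u
    letI := fun {a b : ℕ} (u : EHom a b) => Q.2 u
    show (P.1.lax 0 0 ≫ inv (P.1.map (EHom.toZero 1))) ≫ h.hom.app 0
      = (h.hom.app 0 ⊗ₘ h.hom.app 0) ≫ (Q.1.lax 0 0 ≫ inv (Q.1.map (EHom.toZero 1)))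
    have hn : inv (P.1.map (EHom.toZero 1)) ≫ h.hom.app 0
        = h.hom.app 1 ≫ inv (Q.1.map (EHom.toZero 1)) := by
      rw [IsIso.inv_comp_eq, ← Category.assoc, h.hom.naturality (EHom.toZero 1),
        Category.assoc, IsIso.hom_inv_id, Category.comp_id]
    rw [Category.assoc, hn, ← Category.assoc, ← h.hom.monoidal 0 0, Category.assoc]⟩
  map_id _ := Subtype.ext rfl
  map_comp _ _ := Subtype.ext rfl

/-- The unit isomorphism of the equivalence, componentwise. -/
noncomputable def unitIsoApp (A : SemigrpObj M) : A ≅ (Fn M ⋙ Gn M).obj A where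
  hom := ⟨𝟙 A.X, by
    show A.mul ≫ 𝟙 A.X = (𝟙 A.X ⊗ₘ 𝟙 A.X) ≫ (A.mul ≫ inv (𝟙 A.X))
    simp⟩
  inv := ⟨𝟙 A.X, by
    show (A.mul ≫ inv (𝟙 A.X)) ≫ 𝟙 A.X = (𝟙 A.X ⊗ₘ 𝟙 A.X) ≫ A.mul
    simp⟩
  hom_inv_id := Subtype.ext (Category.id_comp _)
  inv_hom_id := Subtype.ext (Category.id_comp _)

section Counit

variable (P : ObjectProperty.FullSubcategory (fun P : CoSegalSemiMonoid M =>
    ∀ {a b : ℕ} (u : EHom a b), IsIso (P.map u)))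

theorem map_toZero_comp {a b : ℕ} (u : EHom a b) :
    P.1.map (EHom.toZero a) = P.1.map (EHom.toZero b) ≫ P.1.map u := by
  have h := P.1.map_comp u (EHom.toZero b)
  rw [EHom.eq_toZero (u.comp (EHom.toZero b))] at h
  exact h

theorem map_toZero_add (a b : ℕ) :
    P.1.map (EHom.toZero 1) ≫ P.1.map ((EHom.toZero a).add (EHom.toZero b))
      = P.1.map (EHom.toZero (a + b + 1)) := by
  have h := P.1.map_comp ((EHom.toZero a).add (EHom.toZero b)) (EHom.toZero 1)
  rw [EHom.eq_toZero (((EHom.toZero a).add (EHom.toZero b)).comp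
    (EHom.toZero 1))] at h
  exact h.symm

/-- The counit isomorphism, componentwise, forward direction. -/
noncomputable def counitHom :
    CoSegalHom (ofSemigrp (toSemigrp P.1 P.2)) P.1 where
  app n := P.1.map (EHom.toZero n)
  naturality {a b} u := by
    show 𝟙 _ ≫ P.1.map (EHom.toZero a) = P.1.map (EHom.toZero b) ≫ P.1.map u
    rw [Category.id_comp]
    exact map_toZero_comp P u
  monoidal a b := by
    letI := fun {a b : ℕ} (u : EHom a b) => P.2 u
    show (P.1.map (EHom.toZero a) ⊗ₘ P.1.map (EHom.toZero b)) ≫ P.1.lax a b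
      = (P.1.lax 0 0 ≫ inv (P.1.map (EHom.toZero 1)))
        ≫ P.1.map (EHom.toZero (a + b + 1))
    have h2 : P.1.map ((EHom.toZero a).add (EHom.toZero b))
        = inv (P.1.map (EHom.toZero 1)) ≫ P.1.map (EHom.toZero (a + b + 1)) := by
      rw [IsIso.eq_inv_comp]
      exact map_toZero_add P a b
    rw [P.1.lax_natural (EHom.toZero a) (EHom.toZero b), h2]
    simp only [Category.assoc]

/-- The counit isomorphism, componentwise, backward direction. -/
noncomputable def counitInv :
    CoSegalHom P.1 (ofSemigrp (toSemigrp P.1 P.2)) where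
  app n := letI := fun {a b : ℕ} (u : EHom a b) => P.2 u
    inv (P.1.map (EHom.toZero n)) (I := P.2 _)
  naturality {a b} u := by
    letI := fun {a b : ℕ} (u : EHom a b) => P.2 u
    show P.1.map u ≫ inv (P.1.map (EHom.toZero a))
      = inv (P.1.map (EHom.toZero b)) ≫ 𝟙 _
    rw [Category.comp_id, IsIso.comp_inv_eq, IsIso.eq_inv_comp]
    exact (map_toZero_comp P u).symm
  monoidal a b := by
    letI := fun {a b : ℕ} (u : EHom a b) => P.2 u
    show (inv (P.1.map (EHom.toZero a)) ⊗ₘ inv (P.1.map (EHom.toZero b)))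
        ≫ (P.1.lax 0 0 ≫ inv (P.1.map (EHom.toZero 1)))
      = P.1.lax a b ≫ inv (P.1.map (EHom.toZero (a + b + 1)))
    rw [IsIso.eq_comp_inv, ← map_toZero_add P a b]
    simp only [Category.assoc]
    rw [IsIso.inv_hom_id_assoc, ← P.1.lax_natural (EHom.toZero a) (EHom.toZero b),
      ← Category.assoc, MonoidalCategory.tensorHom_comp_tensorHom, IsIso.inv_hom_id,
      IsIso.inv_hom_id, MonoidalCategory.id_tensorHom_id, Category.id_comp]

/-- The counit isomorphism of the equivalence, componentwise. -/
noncomputable def counitIsoApp : (Gn M ⋙ Fn M).obj P ≅ P where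
  hom := ObjectProperty.homMk (counitHom P)
  inv := ObjectProperty.homMk (counitInv P)
  hom_inv_id := ObjectProperty.hom_ext _ <| CoSegalHom.ext' fun n => by
    letI := fun {a b : ℕ} (u : EHom a b) => P.2 u
    show P.1.map (EHom.toZero n) ≫ inv (P.1.map (EHom.toZero n)) = 𝟙 _
    simp
  inv_hom_id := ObjectProperty.hom_ext _ <| CoSegalHom.ext' fun n => by
    letI := fun {a b : ℕ} (u : EHom a b) => P.2 u
    show inv (P.1.map (EHom.toZero n)) ≫ P.1.map (EHom.toZero n) = 𝟙 _
    simp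

end Counit

variable (M) in
/-- The equivalence between semigroup objects and strict Co-Segal semi-monoids. -/
noncomputable def equiv : SemigrpObj M ≌ ObjectProperty.FullSubcategory
    (fun P : CoSegalSemiMonoid M =>
      ∀ {a b : ℕ} (u : EHom a b), IsIso (P.map u)) :=
  CategoryTheory.Equivalence.mk (Fn M) (Gn M)
    (NatIso.ofComponents unitIsoApp (by
      intro A B f
      exact Subtype.ext (by
        show f.1 ≫ 𝟙 B.X = 𝟙 A.X ≫ f.1
        simp)))
    (NatIso.ofComponents (fun P => counitIsoApp P) (by
      intro P Q h
      exact ObjectProperty.hom_ext _ <| CoSegalHom.ext' fun n => by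
        show h.hom.app 0 ≫ Q.1.map (EHom.toZero n)
          = P.1.map (EHom.toZero n) ≫ h.hom.app n
        exact (h.hom.naturality (EHom.toZero n)).symm))

end CoSegalAux

/-- **Semigroup objects are the same as strict Co-Segal semi-monoids.**  For a monoidal
category `M`, there is an equivalence between the category of semigroup objects
(semi-monoids) of `M` and the category of strict Co-Segal semi-monoids of `M`, i.e. lax
monoidal functors `F : (Δ_epi, +)ᵒᵖ → M` all of whose structure maps `F (u)` are
isomorphisms. -/
theorem semigroupObj_equiv_strict_coSegal_semiMonoid
    (M : Type u) [Category.{v} M] [MonoidalCategory M] :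
    Nonempty (SemigrpObj M ≌
      ObjectProperty.FullSubcategory (fun P : CoSegalSemiMonoid M =>
        ∀ {a b : ℕ} (u : EHom a b), IsIso (P.map u))) := by
  exact ⟨CoSegalAux.equiv M⟩
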